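/- arXiv:2302.13968 — 3 statements merged into one kernel-verified Lean document; each statement's English description precedes it below -/
import Mathlib

section
/- The group generated by the transport operator is isometric: let R be the continuous linear operator on ℓ² with (Rx)_1 = −x_2 and (Rx)_n = x_{n−1} − x_{n+1} for n ≥ 2. Then for every t ∈ ℝ and every x ∈ ℓ², ‖exp(tR) x‖ = ‖x‖, where exp denotes the exponential in the Banach algebra of continuous linear operators on ℓ². -/
noncomputable section

open scoped InnerProductSpace

/-- The space `ℓ²` of square-summable real sequences. -/
abbrev ell2 : Type := lp (fun _ : ℕ => ℝ) 2

-- coordinates of an lp element tend to 0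
lemma ell2_coord_tendsto (z : ell2) :
    Filter.Tendsto (fun n : ℕ => (z : ∀ _ : ℕ, ℝ) n) Filter.atTop (nhds 0) := by
  have hmem : Memℓp (z : ∀ _ : ℕ, ℝ) 2 := lp.memℓp z
  have hs : Summable (fun n : ℕ => ‖(z : ∀ _ : ℕ, ℝ) n‖ ^ ((2 : ENNReal).toReal)) :=
    hmem.summable (by norm_num)
  have h0 : Filter.Tendsto (fun n : ℕ => ‖(z : ∀ _ : ℕ, ℝ) n‖ ^ ((2 : ENNReal).toReal))
      Filter.atTop (nhds 0) := hs.tendsto_atTop_zero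
  have h1 : Filter.Tendsto (fun n : ℕ => ‖(z : ∀ _ : ℕ, ℝ) n‖) Filter.atTop (nhds 0) := by
    have h2 := h0.sqrt
    simp only [Real.sqrt_zero] at h2
    convert h2 using 2 with n
    rw [ENNReal.toReal_ofNat, Real.rpow_two, Real.sqrt_sq (norm_nonneg _)]
  exact tendsto_zero_iff_norm_tendsto_zero.mpr h1

lemma skew (R : ell2 →L[ℝ] ell2)
    (hR0 : ∀ x : ell2, (R x : ∀ _ : ℕ, ℝ) 0 = -((x : ∀ _ : ℕ, ℝ) 1))
    (hR : ∀ x : ell2, ∀ n : ℕ,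
      (R x : ∀ _ : ℕ, ℝ) (n + 1) = (x : ∀ _ : ℕ, ℝ) n - (x : ∀ _ : ℕ, ℝ) (n + 2))
    (x y : ell2) : ⟪R x, y⟫_ℝ + ⟪x, R y⟫_ℝ = 0 := by
  set X : ℕ → ℝ := fun n => (x : ∀ _ : ℕ, ℝ) n with hX
  set Y : ℕ → ℝ := fun n => (y : ∀ _ : ℕ, ℝ) n with hY
  have h1 : HasSum (fun n : ℕ => (R x : ∀ _ : ℕ, ℝ) n * Y n) ⟪R x, y⟫_ℝ := by
    have e : (fun n : ℕ => (R x : ∀ _ : ℕ, ℝ) n * Y n) =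
        fun i : ℕ => ⟪(R x : ∀ _ : ℕ, ℝ) i, (y : ∀ _ : ℕ, ℝ) i⟫_ℝ := by
      funext n
      simp [Y, mul_comm]
    rw [e]
    exact lp.hasSum_inner (𝕜 := ℝ) (R x) y
  have h2 : HasSum (fun n : ℕ => X n * (R y : ∀ _ : ℕ, ℝ) n) ⟪x, R y⟫_ℝ := by
    have e : (fun n : ℕ => X n * (R y : ∀ _ : ℕ, ℝ) n) =
        fun i : ℕ => ⟪(x : ∀ _ : ℕ, ℝ) i, (R y : ∀ _ : ℕ, ℝ) i⟫_ℝ := by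
      funext n
      simp [X, mul_comm]
    rw [e]
    exact lp.hasSum_inner (𝕜 := ℝ) x (R y)
  have h := (h1.add h2).tendsto_sum_nat
  set a : ℕ → ℝ := fun n => X n * Y (n+1) + X (n+1) * Y n with ha
  have key : ∀ N : ℕ, (∑ k ∈ Finset.range (N+1),
      ((R x : ∀ _ : ℕ, ℝ) k * Y k + X k * (R y : ∀ _ : ℕ, ℝ) k)) = -(a N) := by
    intro N
    induction N with
    | zero =>
      rw [Finset.sum_range_one, hR0 x, hR0 y]
      show _ = -((x : ∀ _ : ℕ, ℝ) 0 * (y : ∀ _ : ℕ, ℝ) 1 + (x : ∀ _ : ℕ, ℝ) 1 * (y : ∀ _ : ℕ, ℝ) 0)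
      ring
    | succ n ih =>
      rw [Finset.sum_range_succ, ih, hR x n, hR y n, ha]
      simp only [hX, hY]
      ring
  have h' : Filter.Tendsto (fun N : ℕ => -(a N)) Filter.atTop (nhds (⟪R x, y⟫_ℝ + ⟪x, R y⟫_ℝ)) := by
    have h3 := h.comp (Filter.tendsto_add_atTop_nat 1)
    simp only [Function.comp_def] at h3
    exact h3.congr key
  have hx0 := ell2_coord_tendsto x
  have hy0 := ell2_coord_tendsto y
  have hx1 := hx0.comp (Filter.tendsto_add_atTop_nat 1)
  have hy1 := hy0.comp (Filter.tendsto_add_atTop_nat 1)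
  have h0 : Filter.Tendsto (fun N : ℕ => -(a N)) Filter.atTop (nhds 0) := by
    have : Filter.Tendsto a Filter.atTop (nhds 0) := by
      have := (hx0.mul hy1).add (hx1.mul hy0)
      simpa using this
    simpa using this.neg
  exact tendsto_nhds_unique h' h0

/-- **The group generated by the transport operator is isometric**: let `R` be the
continuous linear operator on `ℓ²` with `(Rx)_1 = -x_2` and `(Rx)_n = x_{n-1} - x_{n+1}`
for `n ≥ 2` (sequences are indexed by `ℕ`, so index `k` corresponds to the paper's index
`k + 1`). Then for every `t ∈ ℝ` and every `x ∈ ℓ²`, `‖exp(tR) x‖ = ‖x‖`, where `exp` is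
the exponential in the Banach algebra of continuous linear operators on `ℓ²`. -/
theorem exp_transport_operator_isometric
    (R : ell2 →L[ℝ] ell2)
    (hR0 : ∀ x : ell2, (R x : ∀ _ : ℕ, ℝ) 0 = -((x : ∀ _ : ℕ, ℝ) 1))
    (hR : ∀ x : ell2, ∀ n : ℕ,
      (R x : ∀ _ : ℕ, ℝ) (n + 1) = (x : ∀ _ : ℕ, ℝ) n - (x : ∀ _ : ℕ, ℝ) (n + 2)) :
    ∀ (t : ℝ) (x : ell2), ‖NormedSpace.exp (t • R) x‖ = ‖x‖ := by
  intro t x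
  have hadj : ContinuousLinearMap.adjoint R = -R := by
    symm
    rw [ContinuousLinearMap.eq_adjoint_iff]
    intro u v
    have := skew R hR0 hR u v
    simp only [ContinuousLinearMap.neg_apply, inner_neg_left]
    linarith
  have hskew : (t • R) ∈ skewAdjoint (ell2 →L[ℝ] ell2) := by
    rw [skewAdjoint.mem_iff]
    exact skewAdjoint.smul_mem t (skewAdjoint.mem_iff.mpr hadj)
  let +nondep : NormedAlgebra ℚ (ell2 →L[ℝ] ell2) := .restrictScalars ℚ ℝ _
  have hu := NormedSpace.exp_mem_unitary_of_mem_skewAdjoint hskew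
  exact ContinuousLinearMap.norm_map_of_mem_unitary hu x

end
end

section
/- Lyapunov exponent of the viscous energy shell system (Lemma 3.5): let ν > 0 and let R be the continuous linear operator on ℓ² with (Rx)_1 = −x_2 and (Rx)_n = x_{n−1} − x_{n+1} for n ≥ 2. Then the solution d(t;x) = exp(t(R − νI)) x of the homogeneous system d/dt d(t;x) = (R − νI) d(t;x), d(0;x) = x, satisfies ‖d(t;x)‖ = e^{−νt} ‖x‖ for every x ∈ ℓ² and every t ≥ 0. -/
set_option maxHeartbeats 1000000
set_option synthInstance.maxHeartbeats 400000

noncomputable section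

lemma sq_summable (x : ell2) : Summable fun n => ((x : ∀ _ : ℕ, ℝ) n) ^ 2 := by
  have h := (lp.memℓp x).summable (p := 2) (by norm_num)
  simpa [Real.rpow_natCast, sq_abs] using h

lemma mul_summable {a b : ℕ → ℝ} (ha : Summable fun n => a n ^ 2)
    (hb : Summable fun n => b n ^ 2) : Summable fun n => a n * b n := by
  have h : ∀ n, ‖a n * b n‖ ≤ (a n ^ 2 + b n ^ 2) / 2 := by
    intro n
    rw [Real.norm_eq_abs, abs_mul]
    nlinarith [sq_nonneg (|a n| - |b n|), sq_abs (a n), sq_abs (b n), abs_nonneg (a n),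
      abs_nonneg (b n)]
  exact Summable.of_norm_bounded (by simpa using ((ha.add hb).div_const 2)) h

lemma inner_summable (x y : ell2) :
    Summable fun n => (x : ∀ _ : ℕ, ℝ) n * (y : ∀ _ : ℕ, ℝ) n :=
  mul_summable (sq_summable x) (sq_summable y)

lemma inner_ell2 (x y : ell2) :
    (inner ℝ x y : ℝ) = ∑' n, (x : ∀ _ : ℕ, ℝ) n * (y : ∀ _ : ℕ, ℝ) n := by
  rw [lp.inner_eq_tsum]
  simp [RCLike.inner_apply]
  exact tsum_congr fun _ => mul_comm _ _

lemma skew_inner (R : ell2 →L[ℝ] ell2)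
    (hR0 : ∀ x : ell2, (R x : ∀ _ : ℕ, ℝ) 0 = -((x : ∀ _ : ℕ, ℝ) 1))
    (hR : ∀ x : ell2, ∀ n : ℕ,
      (R x : ∀ _ : ℕ, ℝ) (n + 1) = (x : ∀ _ : ℕ, ℝ) n - (x : ∀ _ : ℕ, ℝ) (n + 2))
    (x y : ell2) : (inner ℝ ((-R) x) y : ℝ) = inner ℝ x (R y) := by
  set a : ℕ → ℝ := (x : ∀ _ : ℕ, ℝ) with ha
  set b : ℕ → ℝ := (y : ∀ _ : ℕ, ℝ) with hb
  have hax : Summable fun n => a n ^ 2 := sq_summable x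
  have hbx : Summable fun n => b n ^ 2 := sq_summable y
  have hax1 : Summable fun n => a (n + 1) ^ 2 := (summable_nat_add_iff 1).2 hax
  have hax2 : Summable fun n => a (n + 2) ^ 2 := (summable_nat_add_iff 2).2 hax
  have hbx1 : Summable fun n => b (n + 1) ^ 2 := (summable_nat_add_iff 1).2 hbx
  have hbx2 : Summable fun n => b (n + 2) ^ 2 := (summable_nat_add_iff 2).2 hbx
  have s1 : Summable fun n => a (n + 1) * b n := mul_summable hax1 hbx
  have s2 : Summable fun n => a (n + 1) * b (n + 2) := mul_summable hax1 hbx2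
  have s3 : Summable fun n => a n * b (n + 1) := mul_summable hax hbx1
  have s4 : Summable fun n => a (n + 2) * b (n + 1) := mul_summable hax2 hbx1
  -- shifts
  have sh1 : ∑' n, a (n + 1) * b n = a 1 * b 0 + ∑' n, a (n + 2) * b (n + 1) := by
    simpa using Summable.tsum_eq_zero_add s1
  have sh2 : ∑' n, a n * b (n + 1) = a 0 * b 1 + ∑' n, a (n + 1) * b (n + 2) := by
    simpa using Summable.tsum_eq_zero_add s3
  -- RHS
  have hrhs : (inner ℝ x (R y) : ℝ)
      = -(a 0 * b 1) + ((∑' n, a (n + 1) * b n) - ∑' n, a (n + 1) * b (n + 2)) := by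
    rw [inner_ell2]
    have hs : Summable fun n => a n * (R y : ∀ _ : ℕ, ℝ) n := inner_summable x (R y)
    rw [Summable.tsum_eq_zero_add hs, hR0 y]
    have : ∀ n : ℕ, a (n + 1) * (R y : ∀ _ : ℕ, ℝ) (n + 1)
        = a (n + 1) * b n - a (n + 1) * b (n + 2) := by
      intro n; rw [hR y n]; ring
    rw [tsum_congr this, Summable.tsum_sub s1 s2]
    ring
  -- LHS
  have hlhs : (inner ℝ ((-R) x) y : ℝ)
      = -(-(a 1 * b 0) + ((∑' n, a n * b (n + 1)) - ∑' n, a (n + 2) * b (n + 1))) := by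
    have h1 : (inner ℝ ((-R) x) y : ℝ) = -(inner ℝ (R x) y) := by
      rw [ContinuousLinearMap.neg_apply, inner_neg_left]
    rw [h1, inner_ell2]
    have hs : Summable fun n => (R x : ∀ _ : ℕ, ℝ) n * b n := inner_summable (R x) y
    rw [Summable.tsum_eq_zero_add hs, hR0 x]
    have : ∀ n : ℕ, (R x : ∀ _ : ℕ, ℝ) (n + 1) * b (n + 1)
        = a n * b (n + 1) - a (n + 2) * b (n + 1) := by
      intro n; rw [hR x n]; ring
    rw [tsum_congr this, Summable.tsum_sub s3 s4]
    ring
  rw [hlhs, hrhs, sh1, sh2]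
  ring

/-- **Lyapunov exponent of the viscous energy shell system** (Lemma 3.5): let `ν > 0` and
let `R` be the continuous linear operator on `ℓ²` with `(Rx)_1 = -x_2` and
`(Rx)_n = x_{n-1} - x_{n+1}` for `n ≥ 2` (sequences are indexed by `ℕ`, so index `k`
corresponds to the paper's index `k + 1`). Then the solution
`d(t;x) = exp(t(R - νI)) x` of the homogeneous system satisfies
`‖d(t;x)‖ = e^{-νt} ‖x‖` for every `x ∈ ℓ²` and `t ≥ 0`. -/
theorem lyapunov_exponent_shell_system
    (ν : ℝ) (hν : 0 < ν)
    (R : ell2 →L[ℝ] ell2)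
    (hR0 : ∀ x : ell2, (R x : ∀ _ : ℕ, ℝ) 0 = -((x : ∀ _ : ℕ, ℝ) 1))
    (hR : ∀ x : ell2, ∀ n : ℕ,
      (R x : ∀ _ : ℕ, ℝ) (n + 1) = (x : ∀ _ : ℕ, ℝ) n - (x : ∀ _ : ℕ, ℝ) (n + 2)) :
    ∀ (x : ell2) (t : ℝ), 0 ≤ t →
      ‖NormedSpace.exp (t • (R - ν • (1 : ell2 →L[ℝ] ell2))) x‖ = Real.exp (-ν * t) * ‖x‖ := by
  intro x t ht
  have hadj : ContinuousLinearMap.adjoint R = -R :=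
    ((ContinuousLinearMap.eq_adjoint_iff (-R) R).mpr fun u v => skew_inner R hR0 hR u v).symm
  -- split the exponent
  have hsplit : t • (R - ν • (1 : ell2 →L[ℝ] ell2))
      = t • R + (-(ν * t)) • (1 : ell2 →L[ℝ] ell2) := by
    rw [smul_sub, smul_smul, sub_eq_add_neg, ← neg_smul]
    ring_nf
  have hcomm : Commute (t • R) ((-(ν * t)) • (1 : ell2 →L[ℝ] ell2)) :=
    (Commute.one_right (t • R)).smul_right _
  have hscal : NormedSpace.exp ((-(ν * t)) • (1 : ell2 →L[ℝ] ell2))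
      = Real.exp (-(ν * t)) • (1 : ell2 →L[ℝ] ell2) := by
    have h1 : ((-(ν * t)) • (1 : ell2 →L[ℝ] ell2))
        = algebraMap ℝ (ell2 →L[ℝ] ell2) (-(ν * t)) := (Algebra.algebraMap_eq_smul_one _).symm
    rw [h1, ← NormedSpace.algebraMap_exp_comm, Algebra.algebraMap_eq_smul_one,
      ← Real.exp_eq_exp_ℝ]
  have hdecomp : NormedSpace.exp (t • (R - ν • (1 : ell2 →L[ℝ] ell2))) x
      = Real.exp (-(ν * t)) • NormedSpace.exp (t • R) x := by
    rw [hsplit, NormedSpace.exp_add_of_commute_of_mem_ball (𝕂 := ℝ) hcomm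
      ((NormedSpace.expSeries_radius_eq_top ℝ (ell2 →L[ℝ] ell2)).symm ▸ edist_lt_top _ _) ((NormedSpace.expSeries_radius_eq_top ℝ (ell2 →L[ℝ] ell2)).symm ▸ edist_lt_top _ _), hscal]
    simp [ContinuousLinearMap.mul_apply, ContinuousLinearMap.smul_apply]
  -- the unitary part
  have hstar : star (t • R) = -(t • R) := by
    rw [star_smul, ContinuousLinearMap.star_eq_adjoint, hadj]
    simp
  have hU : star (NormedSpace.exp (t • R)) * NormedSpace.exp (t • R) = 1 := by
    rw [NormedSpace.star_exp, hstar,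
      ← NormedSpace.exp_add_of_commute_of_mem_ball (𝕂 := ℝ) ((Commute.refl (t • R)).neg_left)
        ((NormedSpace.expSeries_radius_eq_top ℝ (ell2 →L[ℝ] ell2)).symm ▸ edist_lt_top _ _) ((NormedSpace.expSeries_radius_eq_top ℝ (ell2 →L[ℝ] ell2)).symm ▸ edist_lt_top _ _)]
    simp [NormedSpace.exp_zero]
  have hnorm : ‖NormedSpace.exp (t • R) x‖ = ‖x‖ := by
    have h1 : (inner ℝ (NormedSpace.exp (t • R) x) (NormedSpace.exp (t • R) x) : ℝ)
        = inner ℝ x x := by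
      rw [← ContinuousLinearMap.adjoint_inner_left, ← ContinuousLinearMap.star_eq_adjoint,
        ← ContinuousLinearMap.mul_apply, hU, ContinuousLinearMap.one_apply]
    have h2 : ‖NormedSpace.exp (t • R) x‖ ^ 2 = ‖x‖ ^ 2 := by
      rw [← real_inner_self_eq_norm_sq, ← real_inner_self_eq_norm_sq, h1]
    calc ‖NormedSpace.exp (t • R) x‖
        = Real.sqrt (‖NormedSpace.exp (t • R) x‖ ^ 2) := (Real.sqrt_sq (norm_nonneg _)).symm
      _ = Real.sqrt (‖x‖ ^ 2) := by rw [h2]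
      _ = ‖x‖ := Real.sqrt_sq (norm_nonneg _)
  rw [hdecomp, norm_smul, Real.norm_eq_abs, abs_of_pos (Real.exp_pos _), hnorm, neg_mul]

end
end

section
/- Disintegration bound for the distance of the zero-started state to the invariant law (Lemma 3.6, quantitative form): let ν > 0, p ≥ 1, t ≥ 0, and let C and G be independent random elements of ℓ² (on a common probability space) with E[‖C‖^p] < ∞ and E[‖G‖^p] < ∞. Assume the invariance property that exp(t(R − νI)) G + C has the same law as G. Then W_p(C, G) ≤ e^{−νt} (E[‖G‖^p])^{1/p}; in particular, for p = 1, W_1(C, G) ≤ e^{−νt} E[‖G‖]. -/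
open MeasureTheory

noncomputable section

instance : MeasurableSpace ell2 := borel ell2
instance : BorelSpace ell2 := ⟨rfl⟩

/-- The Wasserstein–Kantorovich–Rubinstein distance of order `p` between two measures. -/
def wassersteinW {E : Type*} [NormedAddCommGroup E] [MeasurableSpace E]
    (p : ℝ) (μ ν : Measure E) : ENNReal :=
  (⨅ π ∈ {π : Measure (E × E) | π.map Prod.fst = μ ∧ π.map Prod.snd = ν},
    ∫⁻ q, ENNReal.ofReal (‖q.1 - q.2‖ ^ p) ∂π) ^ (1 / p)

-- separability of ℓ²
instance : TopologicalSpace.SeparableSpace ell2 := by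
  rw [← TopologicalSpace.isSeparable_univ_iff]
  have hcnt : (Set.range (fun i : ℕ => lp.single 2 i (1 : ℝ))).Countable :=
    Set.countable_range _
  have hsep : TopologicalSpace.IsSeparable
      (Submodule.span ℝ (Set.range (fun i : ℕ => lp.single 2 i (1 : ℝ))) : Set ell2) :=
    hcnt.isSeparable.span
  have hdense : Dense
      (Submodule.span ℝ (Set.range (fun i : ℕ => lp.single 2 i (1 : ℝ))) : Set ell2) := by
    intro x
    have hx : HasSum (fun i => lp.single 2 i (x i)) x :=
      lp.hasSum_single (by norm_num) x
    refine mem_closure_of_tendsto hx ?_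
    filter_upwards with s
    refine Submodule.sum_mem _ fun i _ => ?_
    have h1 : lp.single (E := fun _ : ℕ => ℝ) 2 i ((x i) • (1 : ℝ)) =
        (x i) • lp.single 2 i (1 : ℝ) := lp.single_smul (E := fun _ : ℕ => ℝ) (𝕜 := ℝ) 2 i (x i) (1 : ℝ)
    rw [show (x i) = (x i) • (1 : ℝ) by simp, h1]
    exact Submodule.smul_mem _ _ (Submodule.subset_span (Set.mem_range_self i))
  have h2 := hsep.closure
  rw [hdense.closure_eq] at h2
  exact h2

instance : SecondCountableTopology ell2 :=
  UniformSpace.secondCountable_of_separable ell2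



set_option maxHeartbeats 1000000 in
lemma skew_aux (R : ell2 →L[ℝ] ell2)
    (hR0 : ∀ x : ell2, (R x : ∀ _ : ℕ, ℝ) 0 = -((x : ∀ _ : ℕ, ℝ) 1))
    (hR : ∀ x : ell2, ∀ n : ℕ,
      (R x : ∀ _ : ℕ, ℝ) (n + 1) = (x : ∀ _ : ℕ, ℝ) n - (x : ∀ _ : ℕ, ℝ) (n + 2))
    (x : ell2) : @inner ℝ _ _ (R x) x = 0 := by
  have hinner : ∀ f g : ell2, @inner ℝ _ _ f g = ∑' n, (f : ∀ _ : ℕ, ℝ) n * (g : ∀ _ : ℕ, ℝ) n := by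
    intro f g
    rw [lp.inner_eq_tsum]
    exact tsum_congr fun n => by simp [RCLike.inner_apply]; ring
  have hsq : Summable (fun n => (x : ∀ _ : ℕ, ℝ) n * (x : ∀ _ : ℕ, ℝ) n) := by
    have h : Summable (fun n => (x : ∀ _ : ℕ, ℝ) n ^ 2) := by
      simpa [RCLike.inner_apply] using lp.summable_inner (𝕜 := ℝ) x x
    exact h.congr fun n => sq _
  have hsq1 : Summable (fun n => (x : ∀ _ : ℕ, ℝ) (n + 1) * (x : ∀ _ : ℕ, ℝ) (n + 1)) :=
    (summable_nat_add_iff 1).mpr hsq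
  have hsq2 : Summable (fun n => (x : ∀ _ : ℕ, ℝ) (n + 2) * (x : ∀ _ : ℕ, ℝ) (n + 2)) :=
    (summable_nat_add_iff 2).mpr hsq
  -- summability of shifted products
  have hprod : ∀ (a b : ℕ → ℝ), Summable (fun n => a n * a n) → Summable (fun n => b n * b n) →
      Summable (fun n => a n * b n) := by
    intro a b ha hb
    refine Summable.of_abs ?_
    refine Summable.of_nonneg_of_le (fun n => abs_nonneg _)
      (fun n => ?_) (((ha.add hb).div_const 2))
    have := sq_nonneg (|a n| - |b n|)
    have h2 : |a n * b n| = |a n| * |b n| := abs_mul _ _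
    have h3 : a n * a n = |a n| * |a n| := (abs_mul_abs_self _).symm
    have h4 : b n * b n = |b n| * |b n| := (abs_mul_abs_self _).symm
    rw [h2, h3, h4]
    nlinarith [abs_nonneg (a n), abs_nonneg (b n)]
  have s1 : Summable (fun n => (x : ∀ _ : ℕ, ℝ) n * (x : ∀ _ : ℕ, ℝ) (n + 1)) :=
    hprod _ _ hsq hsq1
  have s2 : Summable (fun n => (x : ∀ _ : ℕ, ℝ) (n + 2) * (x : ∀ _ : ℕ, ℝ) (n + 1)) :=
    hprod _ _ hsq2 hsq1
  have sR : Summable (fun n => (R x : ∀ _ : ℕ, ℝ) n * (x : ∀ _ : ℕ, ℝ) n) := by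
    simpa [RCLike.inner_apply] using lp.summable_inner (𝕜 := ℝ) x (R x)
  rw [hinner]
  rw [Summable.tsum_eq_zero_add sR]
  have key : ∀ n : ℕ, (R x : ∀ _ : ℕ, ℝ) (n + 1) * (x : ∀ _ : ℕ, ℝ) (n + 1)
      = (x : ∀ _ : ℕ, ℝ) n * (x : ∀ _ : ℕ, ℝ) (n + 1)
        - (x : ∀ _ : ℕ, ℝ) (n + 2) * (x : ∀ _ : ℕ, ℝ) (n + 1) := by
    intro n; rw [hR x n]; ring
  rw [tsum_congr key, Summable.tsum_sub s1 s2, Summable.tsum_eq_zero_add s1, hR0 x]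
  have : ∑' n, (x : ∀ _ : ℕ, ℝ) (n + 1) * (x : ∀ _ : ℕ, ℝ) (n + 1 + 1)
      = ∑' n, (x : ∀ _ : ℕ, ℝ) (n + 2) * (x : ∀ _ : ℕ, ℝ) (n + 1) := by
    refine tsum_congr fun n => ?_
    rw [mul_comm]
  rw [this]
  ring



set_option maxHeartbeats 1000000 in
lemma exp_norm_decay (R : ell2 →L[ℝ] ell2)
    (hR0 : ∀ x : ell2, (R x : ∀ _ : ℕ, ℝ) 0 = -((x : ∀ _ : ℕ, ℝ) 1))
    (hR : ∀ x : ell2, ∀ n : ℕ,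
      (R x : ∀ _ : ℕ, ℝ) (n + 1) = (x : ∀ _ : ℕ, ℝ) n - (x : ∀ _ : ℕ, ℝ) (n + 2))
    (ν t : ℝ) (x : ell2) :
    ‖NormedSpace.exp (t • (R - ν • (1 : ell2 →L[ℝ] ell2))) x‖ = Real.exp (-ν * t) * ‖x‖ := by
  set A : ell2 →L[ℝ] ell2 := R - ν • (1 : ell2 →L[ℝ] ell2) with hA
  set u : ℝ → ell2 := fun s => NormedSpace.exp (s • A) x with hu_def
  have hu : ∀ s : ℝ, HasDerivAt u (A (u s)) s := by
    intro s
    have h1 : HasDerivAt (fun v : ℝ => NormedSpace.exp (v • A))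
        (A * NormedSpace.exp (s • A)) s := hasDerivAt_exp_smul_const' A s
    have h2 := h1.clm_apply (hasDerivAt_const s x)
    simpa [hu_def, ContinuousLinearMap.mul_apply] using h2
  have hAinner : ∀ y : ell2, @inner ℝ _ _ (A y) y = -ν * @inner ℝ _ _ y y := by
    intro y
    have hskew := skew_aux R hR0 hR y
    have : A y = R y - ν • y := by
      simp [hA, ContinuousLinearMap.sub_apply, ContinuousLinearMap.smul_apply,
        ContinuousLinearMap.one_apply]
    rw [this, inner_sub_left, real_inner_smul_left, hskew]
    ring
  have hg : ∀ s : ℝ, HasDerivAt (fun s => @inner ℝ _ _ (u s) (u s))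
      (-(2 * ν) * @inner ℝ _ _ (u s) (u s)) s := by
    intro s
    have := HasDerivAt.inner ℝ (hu s) (hu s)
    have heq : @inner ℝ _ _ (u s) (A (u s)) + @inner ℝ _ _ (A (u s)) (u s)
        = -(2 * ν) * @inner ℝ _ _ (u s) (u s) := by
      rw [real_inner_comm (A (u s)) (u s), hAinner (u s)]
      ring
    rwa [heq] at this
  have hh : ∀ s : ℝ, HasDerivAt
      (fun s => Real.exp (2 * ν * s) * @inner ℝ _ _ (u s) (u s)) 0 s := by
    intro s
    have he : HasDerivAt (fun s : ℝ => Real.exp (2 * ν * s))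
        (Real.exp (2 * ν * s) * (2 * ν)) s := by
      have := ((hasDerivAt_id s).const_mul (2 * ν)).exp
      simpa using this
    have := he.mul (hg s)
    exact this.congr_deriv (by ring)
  have hconst := is_const_of_deriv_eq_zero
    (f := fun s => Real.exp (2 * ν * s) * @inner ℝ _ _ (u s) (u s))
    (fun s => (hh s).differentiableAt) (fun s => (hh s).deriv) t 0
  have hu0 : u 0 = x := by
    simp [hu_def, NormedSpace.exp_zero]
  rw [hu0] at hconst
  simp only [mul_zero, Real.exp_zero, one_mul] at hconst
  have h1 : Real.exp (2 * ν * t) * ‖u t‖ ^ 2 = ‖x‖ ^ 2 := by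
    rw [← real_inner_self_eq_norm_sq, ← real_inner_self_eq_norm_sq]
    exact hconst
  have hsq' : ‖u t‖ ^ 2 = (Real.exp (-ν * t) * ‖x‖) ^ 2 := by
    have h2 : ‖u t‖ ^ 2 = Real.exp (-(2 * ν * t)) * ‖x‖ ^ 2 := by
      calc ‖u t‖ ^ 2 = Real.exp (-(2 * ν * t)) * (Real.exp (2 * ν * t) * ‖u t‖ ^ 2) := by
            rw [← mul_assoc, ← Real.exp_add]; simp
        _ = Real.exp (-(2 * ν * t)) * ‖x‖ ^ 2 := by rw [h1]
    rw [h2, mul_pow, sq (Real.exp (-ν * t)), ← Real.exp_add]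
    ring_nf
  have := congrArg Real.sqrt hsq'
  rwa [Real.sqrt_sq (norm_nonneg _), Real.sqrt_sq (by positivity)] at this


set_option maxHeartbeats 1000000 in
/-- **Disintegration bound for the distance of the zero-started state to the invariant law**
(Lemma 3.6, quantitative form): let `ν > 0`, `p ≥ 1`, `t ≥ 0`, and let `C, G` be independent
random elements of `ℓ²` with finite `p`-th moments. Here `R` is the transport operator,
`(Rx)_1 = -x_2`, `(Rx)_n = x_{n-1} - x_{n+1}` for `n ≥ 2` (sequences indexed by `ℕ`, index
`k` corresponding to the paper's `k + 1`). If `exp(t(R - νI)) G + C` has the same law as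
`G`, then `W_p(C, G) ≤ e^{-νt} (E[‖G‖^p])^{1/p}`. -/
theorem disintegration_bound
    {Ω : Type*} [MeasurableSpace Ω] (ℙ : Measure Ω) [IsProbabilityMeasure ℙ]
    (ν p t : ℝ) (hν : 0 < ν) (hp : 1 ≤ p) (ht : 0 ≤ t)
    (R : ell2 →L[ℝ] ell2)
    (hR0 : ∀ x : ell2, (R x : ∀ _ : ℕ, ℝ) 0 = -((x : ∀ _ : ℕ, ℝ) 1))
    (hR : ∀ x : ell2, ∀ n : ℕ,
      (R x : ∀ _ : ℕ, ℝ) (n + 1) = (x : ∀ _ : ℕ, ℝ) n - (x : ∀ _ : ℕ, ℝ) (n + 2))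
    (C G : Ω → ell2) (hC : Measurable C) (hG : Measurable G)
    (hindep : ProbabilityTheory.IndepFun C G ℙ)
    (hCmom : ∫⁻ ω, ENNReal.ofReal (‖C ω‖ ^ p) ∂ℙ < ⊤)
    (hGmom : ∫⁻ ω, ENNReal.ofReal (‖G ω‖ ^ p) ∂ℙ < ⊤)
    (hinv : ℙ.map (fun ω =>
        NormedSpace.exp (t • (R - ν • (1 : ell2 →L[ℝ] ell2))) (G ω) + C ω) = ℙ.map G) :
    wassersteinW p (ℙ.map C) (ℙ.map G) ≤
      ENNReal.ofReal (Real.exp (-ν * t)) *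
        (∫⁻ ω, ENNReal.ofReal (‖G ω‖ ^ p) ∂ℙ) ^ (1 / p) := by
  have hp0 : 0 < p := lt_of_lt_of_le one_pos hp
  set E : ell2 →L[ℝ] ell2 := NormedSpace.exp (t • (R - ν • (1 : ell2 →L[ℝ] ell2))) with hE
  set φ : Ω → ell2 × ell2 := fun ω => (C ω, E (G ω) + C ω) with hφ
  have hEmeas : Measurable fun ω => E (G ω) + C ω :=
    ((E.continuous.measurable).comp hG).add hC
  have hφm : Measurable φ := hC.prodMk hEmeas
  set π : Measure (ell2 × ell2) := ℙ.map φ with hπ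
  have hmarg1 : π.map Prod.fst = ℙ.map C := by
    rw [hπ, Measure.map_map measurable_fst hφm]; rfl
  have hmarg2 : π.map Prod.snd = ℙ.map G := by
    rw [hπ, Measure.map_map measurable_snd hφm]
    exact hinv
  have hint_meas : Measurable fun q : ell2 × ell2 => ENNReal.ofReal (‖q.1 - q.2‖ ^ p) := by
    apply (ENNReal.continuous_ofReal.comp ?_).measurable
    exact ((continuous_fst.sub continuous_snd).norm).rpow_const (fun q => Or.inr hp0.le)
  have hGm2 : Measurable fun ω => ENNReal.ofReal (‖G ω‖ ^ p) :=
    ((ENNReal.continuous_ofReal.comp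
      (continuous_norm.rpow_const fun x => Or.inr hp0.le)).measurable).comp hG
  have hval : ∫⁻ q, ENNReal.ofReal (‖q.1 - q.2‖ ^ p) ∂π
      = ENNReal.ofReal (Real.exp (-ν * t)) ^ p * ∫⁻ ω, ENNReal.ofReal (‖G ω‖ ^ p) ∂ℙ := by
    rw [hπ, lintegral_map hint_meas hφm]
    have hptw : ∀ ω, ENNReal.ofReal (‖(φ ω).1 - (φ ω).2‖ ^ p)
        = ENNReal.ofReal (Real.exp (-ν * t)) ^ p * ENNReal.ofReal (‖G ω‖ ^ p) := by
      intro ω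
      have h1 : (φ ω).1 - (φ ω).2 = -(E (G ω)) := by
        simp only [hφ]
        abel
      rw [h1, norm_neg, hE, exp_norm_decay R hR0 hR ν t (G ω),
        Real.mul_rpow (Real.exp_nonneg _) (norm_nonneg _),
        ENNReal.ofReal_mul (by positivity),
        ENNReal.ofReal_rpow_of_nonneg (Real.exp_nonneg _) hp0.le]
    rw [lintegral_congr hptw, lintegral_const_mul _ hGm2]
  unfold wassersteinW
  have hle : (⨅ π' ∈ {π' : Measure (ell2 × ell2) |
        π'.map Prod.fst = ℙ.map C ∧ π'.map Prod.snd = ℙ.map G},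
      ∫⁻ q, ENNReal.ofReal (‖q.1 - q.2‖ ^ p) ∂π')
      ≤ ∫⁻ q, ENNReal.ofReal (‖q.1 - q.2‖ ^ p) ∂π :=
    iInf₂_le π ⟨hmarg1, hmarg2⟩
  calc (⨅ π' ∈ {π' : Measure (ell2 × ell2) |
        π'.map Prod.fst = ℙ.map C ∧ π'.map Prod.snd = ℙ.map G},
      ∫⁻ q, ENNReal.ofReal (‖q.1 - q.2‖ ^ p) ∂π') ^ (1 / p)
      ≤ (∫⁻ q, ENNReal.ofReal (‖q.1 - q.2‖ ^ p) ∂π) ^ (1 / p) :=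
        ENNReal.rpow_le_rpow hle (by positivity)
    _ = ENNReal.ofReal (Real.exp (-ν * t)) *
        (∫⁻ ω, ENNReal.ofReal (‖G ω‖ ^ p) ∂ℙ) ^ (1 / p) := by
        rw [hval, ENNReal.mul_rpow_of_nonneg _ _ (by positivity),
          ← ENNReal.rpow_mul, mul_one_div_cancel hp0.ne', ENNReal.rpow_one]

end
end
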